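/- Let Y ⊆ ℝ^n be closed and convex, y₀ ∈ Y, A ∈ ℝ^{q×n} nonzero, b ∈ ℝ^q, r > 0, and let V_Y = {x − y : x, y ∈ Aff(Y)} be the direction space of Aff(Y). Define ρ(z) = max{t‖z‖ : t ≥ 0, tz ∈ A(B_n(0, r) ∩ V_Y)} for z ∈ A·Aff(Y) − b, and ρ* = min{ρ(z) : ‖z‖ = 1, z ∈ A·V_Y}. Then ρ* > 0 and B_q(0, ρ*) ∩ (A·Aff(Y) − b) ⊆ A(B_n(y₀, r) ∩ Aff(Y)) − b. -/

import Mathlib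

open Matrix

/-- The radius ρ* is positive and
B_q(0, ρ*) ∩ (A·Aff(Y) − b) ⊆ A(B_n(y₀, r) ∩ Aff(Y)) − b. -/
theorem stmt_4 {n q : ℕ}
    (Y : Set (EuclideanSpace ℝ (Fin n))) (hYcl : IsClosed Y) (hYconv : Convex ℝ Y)
    (y₀ : EuclideanSpace ℝ (Fin n)) (hy₀ : y₀ ∈ Y)
    (A : Matrix (Fin q) (Fin n) ℝ) (hA : A ≠ 0)
    (b : Fin q → ℝ) (hAy₀ : A *ᵥ y₀ = b)
    (r : ℝ) (hr : 0 < r)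
    -- ρ(z) = max{t‖z‖ : t ≥ 0, t • z ∈ A(B_n(0, r) ∩ V_Y)}:
    (ρ : EuclideanSpace ℝ (Fin q) → ℝ)
    (hρ : ∀ z : EuclideanSpace ℝ (Fin q),
      (∃ y ∈ (affineSpan ℝ Y : Set (EuclideanSpace ℝ (Fin n))), z = A *ᵥ y - b) →
      IsGreatest {s : ℝ | ∃ t : ℝ, 0 ≤ t ∧ s = t * ‖z‖ ∧
        ∃ v ∈ Metric.closedBall (0 : EuclideanSpace ℝ (Fin n)) r ∩
          ((affineSpan ℝ Y).direction : Set (EuclideanSpace ℝ (Fin n))),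
          t • z = (A *ᵥ v : Fin q → ℝ)} (ρ z))
    -- ρ* = min{ρ(z) : ‖z‖ = 1, z ∈ A·V_Y}:
    (ρstar : ℝ)
    (hρstar : IsLeast {s : ℝ | ∃ z : EuclideanSpace ℝ (Fin q), ‖z‖ = 1 ∧
      (∃ v ∈ ((affineSpan ℝ Y).direction : Set (EuclideanSpace ℝ (Fin n))),
        z = (A *ᵥ v : Fin q → ℝ)) ∧ s = ρ z} ρstar) :
    0 < ρstar ∧
    ∀ z : EuclideanSpace ℝ (Fin q), ‖z‖ ≤ ρstar →
      (∃ y ∈ (affineSpan ℝ Y : Set (EuclideanSpace ℝ (Fin n))), z = A *ᵥ y - b) →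
      ∃ y ∈ Metric.closedBall y₀ r ∩ (affineSpan ℝ Y : Set (EuclideanSpace ℝ (Fin n))),
        z = A *ᵥ y - b := by
  have hy₀span : y₀ ∈ (affineSpan ℝ Y : Set (EuclideanSpace ℝ (Fin n))) :=
    subset_affineSpan ℝ Y hy₀
  have key : ∀ v : EuclideanSpace ℝ (Fin n),
      v ∈ ((affineSpan ℝ Y).direction : Set (EuclideanSpace ℝ (Fin n))) →
      ∃ y ∈ (affineSpan ℝ Y : Set (EuclideanSpace ℝ (Fin n))),
        (A *ᵥ v : Fin q → ℝ) = A *ᵥ y - b := by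
    intro v hv
    refine ⟨v + y₀, ?_, ?_⟩
    · simpa [vadd_eq_add] using AffineSubspace.vadd_mem_of_mem_direction hv hy₀span
    · show (A *ᵥ (v : Fin n → ℝ) : Fin q → ℝ) = A *ᵥ ((v : Fin n → ℝ) + y₀) - b
      rw [Matrix.mulVec_add, hAy₀]
      abel
  have hpos : 0 < ρstar := by
    obtain ⟨z₀, hz₀norm, ⟨v₀, hv₀dir, hz₀eq⟩, hρsval⟩ := hρstar.1
    have hv₀ne : v₀ ≠ 0 := by
      rintro rfl
      rw [show z₀ = 0 by apply WithLp.ofLp_injective; rw [hz₀eq]; simp [Matrix.mulVec_zero]] at hz₀norm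
      simp at hz₀norm
    have hnv₀ : (0:ℝ) < ‖v₀‖ := norm_pos_iff.mpr hv₀ne
    obtain ⟨y, hy, hyz⟩ := key v₀ hv₀dir
    have hG := hρ z₀ ⟨y, hy, by rw [hz₀eq, hyz]⟩
    have hmem : (r / ‖v₀‖) * ‖z₀‖ ≤ ρ z₀ := by
      refine hG.2 ⟨r / ‖v₀‖, by positivity, rfl, (r / ‖v₀‖) • v₀, ⟨?_, ?_⟩, ?_⟩
      · rw [Metric.mem_closedBall, dist_zero_right, norm_smul]
        rw [Real.norm_of_nonneg (by positivity), div_mul_cancel₀ _ hnv₀.ne']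
      · exact Submodule.smul_mem _ _ hv₀dir
      · show (r / ‖v₀‖) • z₀ = (A *ᵥ ((r / ‖v₀‖) • (v₀ : Fin n → ℝ)) : Fin q → ℝ)
        rw [Matrix.mulVec_smul, hz₀eq]
    rw [hz₀norm, mul_one] at hmem
    rw [hρsval]
    exact lt_of_lt_of_le (by positivity) hmem
  refine ⟨hpos, ?_⟩
  rintro z hznorm ⟨y, hyspan, hzeq⟩
  by_cases hz : z = 0
  · exact ⟨y₀, ⟨Metric.mem_closedBall_self hr.le, hy₀span⟩, by rw [hz, hAy₀]; simp⟩
  have hnz : (0:ℝ) < ‖z‖ := norm_pos_iff.mpr hz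
  set u : EuclideanSpace ℝ (Fin q) := ‖z‖⁻¹ • z with hu
  have hunorm : ‖u‖ = 1 := by
    rw [hu, norm_smul, norm_inv, norm_norm, inv_mul_cancel₀ hnz.ne']
  have hvdir : ‖z‖⁻¹ • (y - y₀) ∈ (affineSpan ℝ Y).direction :=
    Submodule.smul_mem _ _ (AffineSubspace.vsub_mem_direction hyspan hy₀span)
  have huv : u = (A *ᵥ (‖z‖⁻¹ • ((y : Fin n → ℝ) - y₀)) : Fin q → ℝ) := by
    rw [Matrix.mulVec_smul, Matrix.mulVec_sub, hAy₀, ← hzeq]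
    exact congrArg WithLp.ofLp hu
  have hρle : ρstar ≤ ρ u := hρstar.2 ⟨u, hunorm, ⟨_, hvdir, huv⟩, rfl⟩
  obtain ⟨yu, hyu, hyuz⟩ := key _ hvdir
  have hG := hρ u ⟨yu, hyu, by rw [huv]; exact hyuz⟩
  obtain ⟨t, ht0, htv, w, ⟨hwball, hwdir⟩, hweq⟩ := hG.1
  rw [hunorm, mul_one] at htv
  have hzt : ‖z‖ ≤ t := by rw [← htv]; exact le_trans hznorm hρle
  have htpos : (0:ℝ) < t := lt_of_lt_of_le (lt_of_lt_of_le hpos hρle) (le_of_eq htv)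
  set c : ℝ := ‖z‖ / t with hc
  have hc0 : 0 < c := div_pos hnz htpos
  have hc1 : c ≤ 1 := (div_le_one htpos).mpr hzt
  refine ⟨y₀ + c • w, ⟨?_, ?_⟩, ?_⟩
  · rw [Metric.mem_closedBall, dist_eq_norm]
    have : y₀ + c • w - y₀ = c • w := by abel
    rw [this, norm_smul, Real.norm_of_nonneg hc0.le]
    calc c * ‖w‖ ≤ 1 * ‖w‖ := by
          apply mul_le_mul_of_nonneg_right hc1 (norm_nonneg _)
      _ = ‖w‖ := one_mul _
      _ ≤ r := by simpa [dist_zero_right] using hwball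
  · have : (c • w) +ᵥ y₀ ∈ affineSpan ℝ Y :=
      AffineSubspace.vadd_mem_of_mem_direction (Submodule.smul_mem _ _ hwdir) hy₀span
    simpa [vadd_eq_add, add_comm] using this
  · have h1 : (A *ᵥ ((y₀ : Fin n → ℝ) + c • w) : Fin q → ℝ) - b
        = c • (A *ᵥ (w : Fin n → ℝ)) := by
      rw [Matrix.mulVec_add, hAy₀, Matrix.mulVec_smul]
      abel
    show z = (A *ᵥ ((y₀ : Fin n → ℝ) + c • (w : Fin n → ℝ)) : Fin q → ℝ) - b
    rw [h1, ← hweq]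
    show z.ofLp = c • (t • (‖z‖⁻¹ • z.ofLp))
    rw [smul_smul, hc, div_mul_cancel₀ _ htpos.ne', smul_smul,
      mul_inv_cancel₀ hnz.ne', one_smul]
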